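/- With g = h ⊕ m a reductive decomposition, the induced products on m satisfy: the cyclic sum over (X,Y,Z) of [X·Y, Z, T] equals 0 for all X,Y,Z,T ∈ m. -/

import Mathlib

theorem lie_yamaguti_LY4
    (k g : Type*) [Field k] [LieRing g] [LieAlgebra k g]
    (h : LieSubalgebra k g) (m : Submodule k g)
    (hc : IsCompl h.toSubmodule m)
    (hm : ∀ X ∈ h, ∀ Y ∈ m, ⁅X, Y⁆ ∈ m)
    (Pm : g →ₗ[k] g) (Ph : g →ₗ[k] g)
    (hPm : Pm = m.subtype ∘ₗ Submodule.linearProjOfIsCompl m h.toSubmodule hc.symm)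
    (hPh : Ph = h.toSubmodule.subtype ∘ₗ Submodule.linearProjOfIsCompl h.toSubmodule m hc)
    (X Y Z T : g) (hX : X ∈ m) (hY : Y ∈ m) (hZ : Z ∈ m) (hT : T ∈ m) :
    ⁅Ph ⁅Pm ⁅X, Y⁆, Z⁆, T⁆ + ⁅Ph ⁅Pm ⁅Y, Z⁆, X⁆, T⁆ + ⁅Ph ⁅Pm ⁅Z, X⁆, Y⁆, T⁆ = 0 := by
  have hPh0 : ∀ v ∈ m, Ph v = 0 := by
    intro v hv
    simp [hPh, Submodule.linearProjOfIsCompl, Submodule.projectionOnto_apply_of_mem_right hc hv]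
  have hPhmem : ∀ v : g, Ph v ∈ h := by
    intro v; rw [hPh]; exact (Submodule.linearProjOfIsCompl h.toSubmodule m hc v).2
  have hsum : ∀ v : g, Pm v = v - Ph v := by
    intro v
    have h1 := Submodule.projection_add_projection_eq_self hc v
    rw [hPm, hPh, eq_sub_iff_add_eq, add_comm]
    exact h1
  have key : ∀ A B C : g, C ∈ m → Ph ⁅Pm ⁅A, B⁆, C⁆ = Ph ⁅⁅A, B⁆, C⁆ := by
    intro A B C hCm
    rw [hsum, sub_lie, map_sub, hPh0 _ (hm _ (hPhmem ⁅A, B⁆) _ hCm), sub_zero]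
  have jac : Ph ⁅⁅X, Y⁆, Z⁆ + Ph ⁅⁅Y, Z⁆, X⁆ + Ph ⁅⁅Z, X⁆, Y⁆ = 0 := by
    rw [← map_add, ← map_add]
    have : ⁅⁅X, Y⁆, Z⁆ + ⁅⁅Y, Z⁆, X⁆ + ⁅⁅Z, X⁆, Y⁆ = 0 := by
      have j := lie_jacobi X Y Z
      rw [← lie_skew X ⁅Y, Z⁆, ← lie_skew Y ⁅Z, X⁆, ← lie_skew Z ⁅X, Y⁆] at j
      have e : ⁅⁅X, Y⁆, Z⁆ + ⁅⁅Y, Z⁆, X⁆ + ⁅⁅Z, X⁆, Y⁆ =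
          -(-⁅⁅Y, Z⁆, X⁆ + -⁅⁅Z, X⁆, Y⁆ + -⁅⁅X, Y⁆, Z⁆) := by abel
      rw [e, j, neg_zero]
    rw [this, map_zero]
  calc ⁅Ph ⁅Pm ⁅X, Y⁆, Z⁆, T⁆ + ⁅Ph ⁅Pm ⁅Y, Z⁆, X⁆, T⁆ + ⁅Ph ⁅Pm ⁅Z, X⁆, Y⁆, T⁆
      = ⁅Ph ⁅⁅X, Y⁆, Z⁆ + Ph ⁅⁅Y, Z⁆, X⁆ + Ph ⁅⁅Z, X⁆, Y⁆, T⁆ := by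
        rw [key _ _ _ hZ, key _ _ _ hX, key _ _ _ hY, add_lie, add_lie]
    _ = 0 := by rw [jac, zero_lie]
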